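/- For integers 0 ≤ a < b < 2^d, the depth of Pos(a,b) in the binary tree is at most d − ⌊log₂(b − a)⌋; equivalently, writing Pos(a,b) = p 1 0^k, one has b − a ≤ 2^{k+1}, so a peer whose address segment has length ℓ sits at tree depth at most d − ⌊log₂ ℓ⌋. -/

import Mathlib

/-- Number of trailing zero bits (2-adic valuation) of an address. -/
def tz (x : ℕ) : ℕ := padicValNat 2 x

/-- Clockwise descendant: `p 1 0^k ↦ p 1 1 0^(k-1)` (meaningful for `1 ≤ tz x`). -/
def CW (x : ℕ) : ℕ := x + 2 ^ (tz x - 1)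

/-- Counterclockwise descendant: `p 1 0^k ↦ p 0 1 0^(k-1)` (meaningful for `1 ≤ tz x`). -/
def CCW (x : ℕ) : ℕ := x - 2 ^ (tz x - 1)

/-- Parent map: `q c 1 0^m ↦ q 1 0^(m+1)`. -/
def UP (x : ℕ) : ℕ := x / 2 ^ (tz x + 2) * 2 ^ (tz x + 2) + 2 ^ (tz x + 1)

/-- One tree step from `a` to a child `b`. -/
def step (a b : ℕ) : Prop := 1 ≤ tz a ∧ (b = CW a ∨ b = CCW a)

/-- The subtree of `x`: addresses reachable by repeated `CW`/`CCW`, including `x`. -/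
def subtree (x : ℕ) : Set ℕ := {y | Relation.ReflTransGen step x y}

/-- `Pos a b = p 1 0^k` where `p` is the longest common binary prefix of `a` and `b`. -/
def Pos (a b : ℕ) : ℕ :=
  b / 2 ^ (Nat.log 2 (a ^^^ b) + 1) * 2 ^ (Nat.log 2 (a ^^^ b) + 1) + 2 ^ Nat.log 2 (a ^^^ b)

lemma xor_shiftRight (a b n : ℕ) : (a ^^^ b) >>> n = (a >>> n) ^^^ (b >>> n) := by
  apply Nat.eq_of_testBit_eq; intro i
  simp [Nat.testBit_shiftRight, Nat.testBit_xor, Nat.add_assoc]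

lemma div_eq_of_xor_lt {a b n : ℕ} (h : a ^^^ b < 2 ^ n) : a / 2 ^ n = b / 2 ^ n := by
  have h0 : (a ^^^ b) >>> n = 0 := by
    rw [Nat.shiftRight_eq_div_pow]; exact Nat.div_eq_of_lt h
  rw [xor_shiftRight] at h0
  have := Nat.xor_eq_zero_iff.mp h0
  simpa [Nat.shiftRight_eq_div_pow] using this

lemma tz_pos (a b : ℕ) (hab : a ≠ b) : tz (Pos a b) = Nat.log 2 (a ^^^ b) := by
  set L := Nat.log 2 (a ^^^ b)
  have h : Pos a b = 2 ^ L * (2 * (b / 2 ^ (L + 1)) + 1) := by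
    simp only [Pos]; ring
  rw [tz, h, padicValNat.mul (by positivity) (by omega),
    padicValNat.prime_pow, padicValNat.eq_zero_of_not_dvd (by omega)]
  omega

/-- writing `Pos a b = p 1 0^k`, one has `b - a ≤ 2^(k+1)`, and the depth
`d - k - 1` of `Pos a b` is at most `d - ⌊log₂ (b - a)⌋`. -/
theorem stmt9 (d a b : ℕ) (hab : a < b) (hb : b < 2 ^ d) :
    b - a ≤ 2 ^ (tz (Pos a b) + 1) ∧
    d - tz (Pos a b) - 1 ≤ d - Nat.log 2 (b - a) :=  by
  have hne : a ≠ b := hab.ne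
  have hx : a ^^^ b ≠ 0 := Nat.xor_ne_zero_iff.mpr hne
  set L := Nat.log 2 (a ^^^ b) with hL
  have htz : tz (Pos a b) = L := tz_pos a b hne
  set M := 2 ^ (L + 1) with hM
  have hlt : a ^^^ b < M := Nat.lt_pow_succ_log_self one_lt_two _
  have hq : a / M = b / M := div_eq_of_xor_lt hlt
  have ha : M * (b / M) + a % M = a := by rw [← hq]; exact Nat.div_add_mod a M
  have hbm := Nat.div_add_mod b M
  have h1 : a % M < M := Nat.mod_lt _ (by positivity)
  have h2 : b % M < M := Nat.mod_lt _ (by positivity)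
  have hsub : b - a ≤ M := by omega
  constructor
  · rwa [htz]
  · have hlog : Nat.log 2 (b - a) ≤ L + 1 := by
      calc Nat.log 2 (b - a) ≤ Nat.log 2 M := Nat.log_mono_right hsub
        _ = L + 1 := Nat.log_pow one_lt_two _
    rw [htz]; omega
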